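/- Define χ : (0,∞) → (0,∞) by χ(t) = log(e/t) for 0 < t ≤ 1, and for k ≥ 0 with a₀ = 1, a_k = (k+3)! (k ≥ 1): χ(t) = 2^{-k}(1 − (t − a_k)/2) for a_k < t ≤ a_k + 1, and χ(t) = 2^{-(k+1)} for a_k + 1 < t ≤ a_{k+1}. Then for every k ≥ 0, (1/a_k) ∫_0^{a_k} χ(s) ds ≤ 2 χ(a_k). -/

import Mathlib

open scoped ENNReal NNReal
open MeasureTheory Set

theorem stmt17 (a : ℕ → ℝ) (ha0 : a 0 = 1)
    (hak : ∀ k : ℕ, 1 ≤ k → a k = (Nat.factorial (k + 3) : ℝ))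
    (χ : ℝ → ℝ)
    (hχlog : ∀ t : ℝ, 0 < t → t ≤ 1 → χ t = Real.log (Real.exp 1 / t))
    (hχlin : ∀ (k : ℕ) (t : ℝ), a k < t → t ≤ a k + 1 →
      χ t = ((2:ℝ) ^ k)⁻¹ * (1 - (t - a k) / 2))
    (hχconst : ∀ (k : ℕ) (t : ℝ), a k + 1 < t → t ≤ a (k + 1) →
      χ t = ((2:ℝ) ^ (k + 1))⁻¹) :
    ∀ k : ℕ, (1 / a k) * ∫ s in (0:ℝ)..(a k), χ s ≤ 2 * χ (a k) := by
  -- basic facts about a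
  have hone : ∀ k, 1 ≤ a k := by
    intro k
    rcases Nat.eq_zero_or_pos k with h | h
    · rw [h, ha0]
    · rw [hak k h]
      exact_mod_cast Nat.one_le_iff_ne_zero.2 (Nat.factorial_ne_zero _)
  have hpos : ∀ k, 0 < a k := fun k => lt_of_lt_of_le one_pos (hone k)
  have hkey : ∀ k, 3 * a k + 1 ≤ a (k + 1) := by
    intro k
    rcases Nat.eq_zero_or_pos k with h | h
    · subst h
      rw [ha0, hak 1 le_rfl]
      norm_num [Nat.factorial]
    · rw [hak k h, hak (k + 1) (by omega)]
      have h1 : Nat.factorial (k + 1 + 3) = (k + 4) * Nat.factorial (k + 3) := by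
        have : k + 1 + 3 = (k + 3) + 1 := by omega
        rw [this, Nat.factorial_succ]
      rw [h1]
      push_cast
      have hF : (1:ℝ) ≤ (Nat.factorial (k + 3) : ℝ) := by
        exact_mod_cast Nat.one_le_iff_ne_zero.2 (Nat.factorial_ne_zero _)
      have hk : (0:ℝ) ≤ (k:ℝ) := Nat.cast_nonneg k
      nlinarith
  have hstep : ∀ k, a k + 1 < a (k + 1) := by
    intro k
    have := hkey k
    have := hpos k
    linarith
  -- value of χ at a k
  have hχak : ∀ k, χ (a k) = ((2:ℝ) ^ k)⁻¹ := by
    intro k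
    cases k with
    | zero =>
      rw [ha0, hχlog 1 one_pos le_rfl]
      simp [Real.log_exp]
    | succ n =>
      rw [hχconst n (a (n + 1)) (hstep n) le_rfl]
  -- the log piece
  have haeq01 : ∀ t ∈ uIoc (0:ℝ) 1, χ t = 1 - Real.log t := by
    intro t ht
    rw [uIoc_of_le zero_le_one] at ht
    rw [hχlog t ht.1 ht.2, Real.log_div (Real.exp_ne_zero 1) (ne_of_gt ht.1), Real.log_exp]
  have hGderiv : ∀ x ∈ Ioo (0:ℝ) 1,
      HasDerivAt (fun t => 2 * t - t * Real.log t) (1 - Real.log x) x := by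
    intro x hx
    have h1 : HasDerivAt (fun t : ℝ => 2 * t) 2 x := by
      simpa using (hasDerivAt_id x).const_mul 2
    have h2 : HasDerivAt (fun t : ℝ => t * Real.log t) (1 * Real.log x + x * x⁻¹) x :=
      (hasDerivAt_id x).mul (Real.hasDerivAt_log (ne_of_gt hx.1))
    have h3 := h1.sub h2
    refine h3.congr_deriv ?_
    rw [mul_inv_cancel₀ (ne_of_gt hx.1)]
    ring
  have hGcont : ContinuousOn (fun t => 2 * t - t * Real.log t) (uIcc (0:ℝ) 1) :=
    ((continuous_const.mul continuous_id).sub Real.continuous_mul_log).continuousOn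
  have hint1 : IntervalIntegrable (fun t => 1 - Real.log t) volume 0 1 := by
    apply intervalIntegral.intervalIntegrable_deriv_of_nonneg hGcont
    · intro x hx
      rw [min_eq_left zero_le_one, max_eq_right zero_le_one] at hx
      exact hGderiv x hx
    · intro x hx
      rw [min_eq_left zero_le_one, max_eq_right zero_le_one] at hx
      have := Real.log_nonpos hx.1.le hx.2.le
      linarith
  have hIχ01 : IntervalIntegrable χ volume 0 1 := by
    have hae : χ =ᵐ[volume.restrict (uIoc (0:ℝ) 1)] fun t => 1 - Real.log t :=
      (ae_restrict_iff' measurableSet_uIoc).2 (ae_of_all _ haeq01)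
    exact hint1.congr_ae hae.symm
  have hval01 : ∫ s in (0:ℝ)..1, χ s = 2 := by
    rw [intervalIntegral.integral_congr_ae (ae_of_all _ haeq01)]
    rw [intervalIntegral.integral_eq_sub_of_hasDeriv_right_of_le zero_le_one
      (by rwa [uIcc_of_le zero_le_one] at hGcont)
      (fun x hx => (hGderiv x hx).hasDerivWithinAt) hint1]
    simp [Real.log_one]
  -- the linear pieces
  have hlin : ∀ k, IntervalIntegrable χ volume (a k) (a k + 1) ∧
      ∫ s in (a k)..(a k + 1), χ s = ((2:ℝ) ^ k)⁻¹ * (3 / 4) := by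
    intro k
    set c := a k with hc
    set A := ((2:ℝ) ^ k)⁻¹ with hA
    have hcc : c < c + 1 := by linarith
    have haeq : ∀ t ∈ uIoc c (c + 1), χ t = A * (1 - (t - c) / 2) := by
      intro t ht
      rw [uIoc_of_le hcc.le] at ht
      exact hχlin k t ht.1 ht.2
    have hgcont : Continuous (fun t : ℝ => A * (1 - (t - c) / 2)) :=
      continuous_const.mul (continuous_const.sub ((continuous_id.sub continuous_const).div_const 2))
    have hgint : IntervalIntegrable (fun t : ℝ => A * (1 - (t - c) / 2)) volume c (c + 1) :=
      hgcont.intervalIntegrable _ _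
    have hF : ∀ t : ℝ, HasDerivAt (fun t => A * (t - (t - c) ^ 2 / 4))
        (A * (1 - (t - c) / 2)) t := by
      intro t
      have h1 : HasDerivAt (fun t : ℝ => t - c) 1 t := (hasDerivAt_id t).sub_const c
      have h2 : HasDerivAt (fun t : ℝ => (t - c) ^ 2) (2 * (t - c) ^ 1 * 1) t := h1.pow 2
      have h3 : HasDerivAt (fun t : ℝ => t - (t - c) ^ 2 / 4) (1 - 2 * (t - c) ^ 1 * 1 / 4) t :=
        (hasDerivAt_id t).sub (h2.div_const 4)
      have h4 := h3.const_mul A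
      refine h4.congr_deriv ?_
      ring
    have hae : χ =ᵐ[volume.restrict (uIoc c (c + 1))] fun t => A * (1 - (t - c) / 2) :=
      (ae_restrict_iff' measurableSet_uIoc).2 (ae_of_all _ haeq)
    constructor
    · exact hgint.congr_ae hae.symm
    · rw [intervalIntegral.integral_congr_ae (ae_of_all _ haeq)]
      rw [intervalIntegral.integral_eq_sub_of_hasDerivAt (fun t _ => hF t) hgint]
      ring
  -- the constant pieces
  have hconst : ∀ k, IntervalIntegrable χ volume (a k + 1) (a (k + 1)) ∧
      ∫ s in (a k + 1)..(a (k + 1)), χ s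
        = (a (k + 1) - (a k + 1)) * ((2:ℝ) ^ (k + 1))⁻¹ := by
    intro k
    have hlt := hstep k
    have haeq : ∀ t ∈ uIoc (a k + 1) (a (k + 1)), χ t = ((2:ℝ) ^ (k + 1))⁻¹ := by
      intro t ht
      rw [uIoc_of_le hlt.le] at ht
      exact hχconst k t ht.1 ht.2
    have hae : χ =ᵐ[volume.restrict (uIoc (a k + 1) (a (k + 1)))]
        fun _ => ((2:ℝ) ^ (k + 1))⁻¹ :=
      (ae_restrict_iff' measurableSet_uIoc).2 (ae_of_all _ haeq)
    constructor
    · exact (((continuous_const : Continuous fun _ : ℝ => ((2:ℝ) ^ (k + 1))⁻¹).intervalIntegrable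
        _ _)).congr_ae hae.symm
    · rw [intervalIntegral.integral_congr_ae (ae_of_all _ haeq)]
      rw [intervalIntegral.integral_const]
      simp [smul_eq_mul]
  -- main induction
  have main : ∀ k, IntervalIntegrable χ volume 0 (a k) ∧
      ∫ s in (0:ℝ)..(a k), χ s ≤ 2 * ((2:ℝ) ^ k)⁻¹ * a k := by
    intro k
    induction k with
    | zero =>
      rw [ha0]
      refine ⟨hIχ01, ?_⟩
      rw [hval01]
      norm_num
    | succ n ih =>
      obtain ⟨ihInt, ihle⟩ := ih
      obtain ⟨hl1, hl2⟩ := hlin n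
      obtain ⟨hc1, hc2⟩ := hconst n
      have hi1 : IntervalIntegrable χ volume 0 (a n + 1) := ihInt.trans hl1
      have hInt : IntervalIntegrable χ volume 0 (a (n + 1)) := hi1.trans hc1
      refine ⟨hInt, ?_⟩
      rw [← intervalIntegral.integral_add_adjacent_intervals hi1 hc1,
          ← intervalIntegral.integral_add_adjacent_intervals ihInt hl1, hl2, hc2]
      have h2n : (0:ℝ) < ((2:ℝ) ^ n)⁻¹ := by positivity
      have hmul : ((2:ℝ) ^ n)⁻¹ * (3 * a n + 1) ≤ ((2:ℝ) ^ n)⁻¹ * a (n + 1) :=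
        mul_le_mul_of_nonneg_left (hkey n) h2n.le
      have hps : ((2:ℝ) ^ (n + 1))⁻¹ = ((2:ℝ) ^ n)⁻¹ * 2⁻¹ := by
        rw [pow_succ, mul_inv]
      rw [hps]
      nlinarith [ihle, hmul, h2n]
  -- conclusion
  intro k
  obtain ⟨_, hle⟩ := main k
  rw [hχak k]
  have hpk := hpos k
  calc (1 / a k) * ∫ s in (0:ℝ)..(a k), χ s
      ≤ (1 / a k) * (2 * ((2:ℝ) ^ k)⁻¹ * a k) :=
        mul_le_mul_of_nonneg_left hle (by positivity)
    _ = 2 * ((2:ℝ) ^ k)⁻¹ := by field_simp
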